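/- Let d ≥ 1, P_i ∈ ℝ^{n_i×n}, ‖·‖_{α_i} norms on ℝ^{n_i}, ‖·‖_γ a monotonic norm on ℝ^d, and assume the stacked matrix M = [P_1^T,…,P_d^T]^T has rank n. Define ‖x‖_α = ‖(‖P_1 x‖_{α_1}, …, ‖P_d x‖_{α_d})‖_γ. Then ‖·‖_α is a norm on ℝ^n and its dual norm is ‖x‖_{α*} = inf{ ‖(‖u_1‖_{α_1*},…,‖u_d‖_{α_d*})‖_{γ*} : u_i ∈ ℝ^{n_i}, P_1^T u_1 + ⋯ + P_d^T u_d = x }. -/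

import Mathlib

open Matrix

/-- The standard norm axioms for a function on `Fin m → ℝ`. -/
def IsNorm {m : ℕ} (N : (Fin m → ℝ) → ℝ) : Prop :=
  (∀ (c : ℝ) (x : Fin m → ℝ), N (c • x) = |c| * N x) ∧
  (∀ x y : Fin m → ℝ, N (x + y) ≤ N x + N y) ∧
  (∀ x : Fin m → ℝ, N x = 0 ↔ x = 0)

/-- Dual norm with respect to the standard inner product. -/
noncomputable def dualN {m : ℕ} (N : (Fin m → ℝ) → ℝ) (y : Fin m → ℝ) : ℝ :=
  sSup {r : ℝ | ∃ x : Fin m → ℝ, x ≠ 0 ∧ r = (∑ i, x i * y i) / N x}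

namespace StmtAux

variable {m : ℕ} {N : (Fin m → ℝ) → ℝ}

lemma nonneg (hN : IsNorm N) (x : Fin m → ℝ) : 0 ≤ N x := by
  have h0 : N 0 = 0 := (hN.2.2 0).2 rfl
  have h := hN.2.1 x (-x)
  have hneg : N (-x) = N x := by
    have := hN.1 (-1) x
    simpa using this
  simp only [add_neg_cancel, h0, hneg] at h
  linarith

lemma pos (hN : IsNorm N) {x : Fin m → ℝ} (hx : x ≠ 0) : 0 < N x := by
  rcases lt_or_eq_of_le (nonneg hN x) with h | h
  · exact h
  · exact absurd ((hN.2.2 x).1 h.symm) hx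

/-- Upper bound: `N x ≤ C * ‖x‖` for `C = ∑ N (eᵢ)`. -/
lemma upper (hN : IsNorm N) (x : Fin m → ℝ) :
    N x ≤ (∑ i, N (Pi.single i 1)) * ‖x‖ := by
  have hx : x = ∑ i, (x i) • (Pi.single i 1 : Fin m → ℝ) := by
    funext j
    simp [Finset.sum_apply, Pi.single_apply, Finset.sum_ite_eq']
  calc N x = N (∑ i, (x i) • (Pi.single i 1 : Fin m → ℝ)) := by rw [← hx]
    _ ≤ ∑ i, N ((x i) • (Pi.single i 1 : Fin m → ℝ)) := by
        classical
        induction (Finset.univ : Finset (Fin m)) using Finset.induction with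
        | empty => simp [(hN.2.2 0).2 rfl]
        | insert a s hj ih =>
          rw [Finset.sum_insert hj, Finset.sum_insert hj]
          exact le_trans (hN.2.1 _ _) (by linarith)
    _ = ∑ i, |x i| * N (Pi.single i 1) := by simp [hN.1]
    _ ≤ ∑ i, ‖x‖ * N (Pi.single i 1) := by
        apply Finset.sum_le_sum
        intro i _
        exact mul_le_mul_of_nonneg_right
          (by simpa using norm_le_pi_norm x i) (nonneg hN _)
    _ = (∑ i, N (Pi.single i 1)) * ‖x‖ := by
        rw [Finset.sum_mul]
        exact Finset.sum_congr rfl fun i _ => mul_comm _ _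

lemma lipschitz (hN : IsNorm N) (x y : Fin m → ℝ) :
    |N x - N y| ≤ (∑ i, N (Pi.single i 1)) * ‖x - y‖ := by
  have h1 : N x ≤ N (x - y) + N y := by
    have h := hN.2.1 (x - y) y
    simpa using h
  have h2 : N y ≤ N (x - y) + N x := by
    have := hN.2.1 (y - x) x
    have hneg : N (y - x) = N (x - y) := by
      have h := hN.1 (-1) (x - y)
      simp only [abs_neg, abs_one, one_mul] at h
      rw [← h]; congr 1; funext j; simp
    rw [hneg] at this; simpa using this
  have hb := upper hN (x - y)
  rw [abs_sub_le_iff]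
  constructor <;> linarith

lemma continuous_of_isNorm (hN : IsNorm N) : Continuous N := by
  apply Metric.continuous_iff.2
  intro x ε hε
  set C := (∑ i, N (Pi.single i 1)) with hC
  have hC0 : 0 ≤ C := Finset.sum_nonneg fun i _ => nonneg hN _
  refine ⟨ε / (C + 1), by positivity, fun y hy => ?_⟩
  have := lipschitz hN y x
  have hdist : dist (N y) (N x) = |N y - N x| := Real.dist_eq _ _
  rw [hdist]
  have hxy : ‖y - x‖ = dist y x := by rw [dist_eq_norm]
  calc |N y - N x| ≤ C * ‖y - x‖ := this
    _ ≤ C * (ε / (C + 1)) := by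
        apply mul_le_mul_of_nonneg_left _ hC0
        rw [hxy]; exact le_of_lt hy
    _ < ε := by
        rw [div_eq_inv_mul, ← mul_assoc]
        have : C * (C + 1)⁻¹ < 1 := by
          rw [mul_inv_lt_iff₀ (by linarith)]; linarith
        nlinarith



lemma lower (hN : IsNorm N) : ∃ c : ℝ, 0 < c ∧ ∀ x, c * ‖x‖ ≤ N x := by
  rcases Nat.eq_zero_or_pos m with hm | hm
  · refine ⟨1, one_pos, fun x => ?_⟩
    subst hm
    have hx : x = 0 := Subsingleton.elim _ _
    rw [hx, (hN.2.2 0).2 rfl]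
    simp
  · -- minimize N over the unit sphere
    have hsc : IsCompact (Metric.sphere (0 : Fin m → ℝ) 1) := isCompact_sphere 0 1
    have hsne : (Metric.sphere (0 : Fin m → ℝ) 1).Nonempty := by
      refine ⟨Pi.single ⟨0, hm⟩ 1, ?_⟩
      simp [Pi.norm_single]
    obtain ⟨v, hv, hvmin'⟩ := hsc.exists_isMinOn hsne
      ((continuous_of_isNorm hN).continuousOn)
    have hvmin : ∀ w ∈ Metric.sphere (0 : Fin m → ℝ) 1, N v ≤ N w := fun w hw => hvmin' hw
    have hv1 : ‖v‖ = 1 := by simpa using hv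
    have hv0 : v ≠ 0 := fun h => by simp [h] at hv1
    refine ⟨N v, pos hN hv0, fun x => ?_⟩
    by_cases hx : x = 0
    · simp [hx, (hN.2.2 0).2 rfl]
    · have hxn : (0:ℝ) < ‖x‖ := norm_pos_iff.2 hx
      have hmem : ‖x‖⁻¹ • x ∈ Metric.sphere (0 : Fin m → ℝ) 1 := by
        simp [norm_smul, abs_of_pos (inv_pos.2 hxn), inv_mul_cancel₀ (ne_of_gt hxn)]
      have := hvmin _ hmem
      have hhom := hN.1 (‖x‖⁻¹) x
      rw [hhom, abs_of_pos (inv_pos.2 hxn)] at this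
      calc N v * ‖x‖ ≤ (‖x‖⁻¹ * N x) * ‖x‖ :=
            mul_le_mul_of_nonneg_right this (le_of_lt hxn)
        _ = N x := by field_simp

lemma dual_facts (hN : IsNorm N) (y : Fin m → ℝ) :
    0 ≤ dualN N y ∧ (∃ v, N v ≤ 1 ∧ ∑ i, v i * y i = dualN N y) ∧
    (∀ x, ∑ i, x i * y i ≤ dualN N y * N x) := by
  classical
  obtain ⟨c, hc, hcl⟩ := lower hN
  set f : (Fin m → ℝ) → ℝ := fun v => ∑ i, v i * y i with hf
  have hfcont : Continuous f := by
    apply continuous_finset_sum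
    intro i _
    exact (continuous_apply i).mul continuous_const
  set K : Set (Fin m → ℝ) := {v | N v ≤ 1} with hK
  have hKc : IsCompact K := by
    have hclosed : IsClosed K := IsClosed.preimage (continuous_of_isNorm hN) isClosed_Iic
    have hbdd : Bornology.IsBounded K := by
      apply Bornology.IsBounded.subset (Metric.isBounded_closedBall (x := (0 : Fin m → ℝ)) (r := 1/c))
      intro v hv
      simp only [Metric.mem_closedBall, dist_zero_right]
      have := hcl v
      rw [le_div_iff₀ hc, mul_comm]
      exact this.trans hv
    exact Metric.isCompact_of_isClosed_isBounded hclosed hbdd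
  have hKne : K.Nonempty := ⟨0, by simp [hK, (hN.2.2 0).2 rfl]⟩
  obtain ⟨v, hvK, hvmax'⟩ := hKc.exists_isMaxOn hKne hfcont.continuousOn
  have hvmax : ∀ w ∈ K, f w ≤ f v := fun w hw => hvmax' hw
  set V := f v with hV
  have hV0 : 0 ≤ V := by
    have h0 := hvmax 0 (by simp [hK, (hN.2.2 0).2 rfl])
    simpa [hf] using h0
  set S : Set ℝ := {r : ℝ | ∃ x : Fin m → ℝ, x ≠ 0 ∧ r = (∑ i, x i * y i) / N x} with hS
  have hub : ∀ r ∈ S, r ≤ V := by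
    rintro r ⟨x, hx, rfl⟩
    have hNx : 0 < N x := pos hN hx
    have hmem : (N x)⁻¹ • x ∈ K := by
      simp only [hK, Set.mem_setOf_eq, hN.1, abs_of_pos (inv_pos.2 hNx)]
      rw [inv_mul_cancel₀ (ne_of_gt hNx)]
    have := hvmax _ hmem
    have hfx : f ((N x)⁻¹ • x) = (∑ i, x i * y i) / N x := by
      simp only [hf, Pi.smul_apply, smul_eq_mul, div_eq_inv_mul, Finset.mul_sum]
      exact Finset.sum_congr rfl fun i _ => by ring
    rw [hfx] at this
    exact this
  have hSbdd : BddAbove S := ⟨V, hub⟩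
  have hDV : dualN N y = V := by
    apply le_antisymm
    · exact Real.sSup_le hub hV0
    · rcases eq_or_lt_of_le hV0 with h | h
      · rw [← h]
        by_cases hSne : S.Nonempty
        · obtain ⟨r, x, hx, hr⟩ := hSne
          have hr' : -r ∈ S := by
            refine ⟨-x, by simpa using hx, ?_⟩
            have hNneg : N (-x) = N x := by
              have := hN.1 (-1) x; simpa using this
            rw [hr, hNneg]
            rw [← neg_div]
            congr 1
            rw [← Finset.sum_neg_distrib]
            exact Finset.sum_congr rfl fun i _ => by simp
          rcases le_total 0 r with h1 | h1
          · exact le_trans h1 (le_csSup hSbdd (by exact ⟨x, hx, hr⟩))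
          · exact le_trans (by linarith) (le_csSup hSbdd hr')
        · have : S = ∅ := Set.not_nonempty_iff_eq_empty.1 hSne
          simp [dualN, ← hS, this, Real.sSup_empty]
      · have hv0 : v ≠ 0 := by
          intro hv0
          rw [hV, hf, hv0] at h
          simp at h
        have hNv : 0 < N v := pos hN hv0
        have hNv1 : N v ≤ 1 := hvK
        have hmem : V / N v ∈ S := ⟨v, hv0, rfl⟩
        have h1 : V ≤ V / N v := by
          rw [le_div_iff₀ hNv]
          exact mul_le_of_le_one_right (le_of_lt h) hNv1
        exact le_trans h1 (le_csSup hSbdd hmem)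
  refine ⟨hDV ▸ hV0, ⟨v, hvK, by rw [hDV]⟩, ?_⟩
  intro x
  by_cases hx : x = 0
  · subst hx
    rw [(hN.2.2 0).2 rfl, mul_zero]
    simp
  · have hNx : 0 < N x := pos hN hx
    have hmem : (∑ i, x i * y i) / N x ∈ S := ⟨x, hx, rfl⟩
    have := le_csSup hSbdd hmem
    have hD : (∑ i, x i * y i) / N x ≤ dualN N y := this
    rw [div_le_iff₀ hNx] at hD
    linarith [hD]

lemma dual_le (hN : IsNorm N) (hm : 0 < m) (y : Fin m → ℝ) (C : ℝ)
    (h : ∀ x, ∑ i, x i * y i ≤ C * N x) : dualN N y ≤ C := by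
  have hC0 : 0 ≤ C := by
    set e : Fin m → ℝ := Pi.single ⟨0, hm⟩ 1 with he
    have hpos : 0 < N e := pos hN (by
      intro hcontra
      have := congrFun hcontra ⟨0, hm⟩
      simp [he] at this)
    have h1 := h e
    have h2 := h (-e)
    have hNneg : N (-e) = N e := by
      have := hN.1 (-1) e; simpa using this
    have hsum : ∑ i, (-e) i * y i = -∑ i, e i * y i := by
      rw [← Finset.sum_neg_distrib]
      exact Finset.sum_congr rfl fun i _ => by simp
    rw [hNneg, hsum] at h2
    nlinarith
  apply Real.sSup_le _ hC0
  rintro r ⟨x, hx, rfl⟩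
  rw [div_le_iff₀ (pos hN hx)]
  exact h x

end StmtAux

open StmtAux in
theorem stmt9 {d : ℕ} (hd : 1 ≤ d) {n : ℕ} (nn : Fin d → ℕ)
    (P : ∀ i, Matrix (Fin (nn i)) (Fin n) ℝ)
    (α : ∀ i, (Fin (nn i) → ℝ) → ℝ) (hα : ∀ i, IsNorm (α i))
    (γ : (Fin d → ℝ) → ℝ) (hγ : IsNorm γ)
    (hγmono : ∀ x y : Fin d → ℝ, (∀ i, |x i| ≤ |y i|) → γ x ≤ γ y)
    -- the stacked matrix `M = [P_1^T, …, P_d^T]^T` has rank `n`,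
    -- i.e. the map `x ↦ (P_i x)_i` is injective
    (hrank : ∀ x : Fin n → ℝ, (∀ i, (P i).mulVec x = 0) → x = 0)
    (Nα : (Fin n → ℝ) → ℝ)
    (hNα : Nα = fun x => γ (fun i => α i ((P i).mulVec x))) :
    IsNorm Nα ∧
    (∀ x : Fin n → ℝ,
      dualN Nα x
        = sInf {r : ℝ | ∃ u : ∀ i, Fin (nn i) → ℝ,
            (∑ i, (P i)ᵀ.mulVec (u i)) = x ∧
            r = dualN γ (fun i => dualN (α i) (u i))}) := by
  classical
  subst hNα
  -- auxiliary monotonicity for nonnegative vectors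
  have hmono' : ∀ s t : Fin d → ℝ, (∀ i, 0 ≤ s i) → (∀ i, s i ≤ t i) → γ s ≤ γ t := by
    intro s t hs hst
    refine hγmono s t fun i => ?_
    rw [abs_of_nonneg (hs i), abs_of_nonneg ((hs i).trans (hst i))]
    exact hst i
  -- Part 1 : IsNorm Nα
  have hNαnorm : IsNorm (fun x => γ (fun i => α i ((P i).mulVec x))) := by
    refine ⟨?_, ?_, ?_⟩
    · intro c x
      have h1 : (fun i => α i ((P i).mulVec (c • x)))
          = |c| • (fun i => α i ((P i).mulVec x)) := by
        funext i
        rw [Matrix.mulVec_smul, (hα i).1]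
        rfl
      show γ (fun i => α i ((P i).mulVec (c • x))) = |c| * γ (fun i => α i ((P i).mulVec x))
      rw [h1, hγ.1, abs_abs]
    · intro x y
      have h1 : γ (fun i => α i ((P i).mulVec (x + y)))
          ≤ γ ((fun i => α i ((P i).mulVec x)) + fun i => α i ((P i).mulVec y)) := by
        apply hmono'
        · intro i; exact nonneg (hα i) _
        · intro i
          rw [Matrix.mulVec_add]
          exact (hα i).2.1 _ _
      exact h1.trans (hγ.2.1 _ _)
    · intro x
      constructor
      · intro h
        have h1 : (fun i => α i ((P i).mulVec x)) = 0 := (hγ.2.2 _).1 h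
        apply hrank
        intro i
        exact ((hα i).2.2 _).1 (congrFun h1 i)
      · intro h
        subst h
        have h1 : (fun i => α i ((P i).mulVec 0)) = (0 : Fin d → ℝ) := by
          funext i
          simp [((hα i).2.2 0).2 rfl]
        show γ (fun i => α i ((P i).mulVec 0)) = 0
        rw [h1]
        exact (hγ.2.2 0).2 rfl
  refine ⟨hNαnorm, ?_⟩
  intro x
  set C := dualN (fun x => γ (fun i => α i ((P i).mulVec x))) x with hC
  obtain ⟨hC0, -, hCbound⟩ := dual_facts hNαnorm x
  -- the linear map z ↦ (Pᵢ z)ᵢ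
  set Mlin : (Fin n → ℝ) →ₗ[ℝ] (∀ i, Fin (nn i) → ℝ) :=
    { toFun := fun z i => (P i).mulVec z
      map_add' := fun a b => by funext i; exact Matrix.mulVec_add _ _ _
      map_smul' := fun c a => by
        funext i
        simp only [RingHom.id_apply, Pi.smul_apply]
        exact Matrix.mulVec_smul _ _ _ } with hMlin
  have hinj : Function.Injective Mlin := by
    intro a b hab
    have h : ∀ i, (P i).mulVec (a - b) = 0 := by
      intro i
      rw [Matrix.mulVec_sub]
      have := congrFun hab i
      simp only [hMlin, LinearMap.coe_mk, AddHom.coe_mk] at this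
      rw [this]; simp
    have := hrank _ h
    exact sub_eq_zero.1 this
  set φ : (Fin n → ℝ) →ₗ[ℝ] ℝ :=
    { toFun := fun z => ∑ k, z k * x k
      map_add' := fun a b => by
        rw [← Finset.sum_add_distrib]
        exact Finset.sum_congr rfl fun k _ => by simp [add_mul]
      map_smul' := fun c a => by
        simp only [RingHom.id_apply, smul_eq_mul, Finset.mul_sum]
        exact Finset.sum_congr rfl fun k _ => by simp [mul_assoc] } with hφ
  set e := LinearEquiv.ofInjective Mlin hinj with he
  set f : (∀ i, Fin (nn i) → ℝ) →ₗ.[ℝ] ℝ :=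
    ⟨LinearMap.range Mlin, φ.comp e.symm.toLinearMap⟩ with hf
  set Nfun : (∀ i, Fin (nn i) → ℝ) → ℝ := fun v => C * γ (fun i => α i (v i)) with hNfun
  have hNfun_hom : ∀ c : ℝ, 0 < c → ∀ v, Nfun (c • v) = c * Nfun v := by
    intro c hc v
    have h1 : (fun i => α i ((c • v) i)) = |c| • fun i => α i (v i) := by
      funext i
      have : (c • v) i = c • (v i) := rfl
      rw [this, (hα i).1]
      rfl
    simp only [hNfun, h1, hγ.1, abs_abs, abs_of_pos hc]
    ring
  have hNfun_add : ∀ v w, Nfun (v + w) ≤ Nfun v + Nfun w := by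
    intro v w
    have h1 : γ (fun i => α i ((v + w) i))
        ≤ γ ((fun i => α i (v i)) + fun i => α i (w i)) := by
      apply hmono'
      · intro i; exact nonneg (hα i) _
      · intro i; exact (hα i).2.1 _ _
    have h2 := hγ.2.1 (fun i => α i (v i)) (fun i => α i (w i))
    simp only [hNfun, ← mul_add]
    exact mul_le_mul_of_nonneg_left (h1.trans h2) hC0
  have hesymm : ∀ z : Fin n → ℝ, ∀ hz : Mlin z ∈ LinearMap.range Mlin,
      e.symm ⟨Mlin z, hz⟩ = z := by
    intro z hz
    apply hinj
    have h1 := LinearEquiv.ofInjective_symm_apply (f := Mlin) (h := hinj) (⟨Mlin z, hz⟩ : LinearMap.range Mlin)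
    rw [he]
    rw [h1]
  have hfle : ∀ p : f.domain, f p ≤ Nfun p := by
    rintro ⟨w, hw⟩
    obtain ⟨z, rfl⟩ := hw
    have h1 : f ⟨Mlin z, LinearMap.mem_range_self Mlin z⟩ = φ z := by
      show φ.comp e.symm.toLinearMap _ = φ z
      simp only [LinearMap.comp_apply, LinearEquiv.coe_toLinearMap]
      rw [hesymm z]
    rw [h1]
    have h2 := hCbound z
    simp only [hφ, LinearMap.coe_mk, AddHom.coe_mk]
    calc ∑ k, z k * x k ≤ C * γ (fun i => α i ((P i).mulVec z)) := h2
      _ = Nfun (Mlin z) := rfl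
  obtain ⟨g, hg_ext, hg_le⟩ := exists_extension_of_le_sublinear f Nfun hNfun_hom hNfun_add hfle
  have hgM : ∀ z : Fin n → ℝ, g (Mlin z) = ∑ k, z k * x k := by
    intro z
    have h1 := hg_ext ⟨Mlin z, LinearMap.mem_range_self Mlin z⟩
    have h2 : f ⟨Mlin z, LinearMap.mem_range_self Mlin z⟩ = φ z := by
      show φ.comp e.symm.toLinearMap _ = φ z
      simp only [LinearMap.comp_apply, LinearEquiv.coe_toLinearMap]
      rw [hesymm z]
    rw [h2] at h1
    exact h1
  -- the dual vectors
  set u : ∀ i, Fin (nn i) → ℝ := fun i j => g (Pi.single i (Pi.single j 1)) with hu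
  -- representation of g
  have hrep : ∀ v : ∀ i, Fin (nn i) → ℝ, g v = ∑ i, ∑ j, v i j * u i j := by
    intro v
    have h1 : v = ∑ i, (LinearMap.single ℝ (fun i => Fin (nn i) → ℝ) i) (v i) := by
      conv_lhs => rw [← Finset.univ_sum_single v]
      exact Finset.sum_congr rfl fun i _ => rfl
    have h2 : ∀ i, (v i) = ∑ j, (LinearMap.single ℝ (fun _ : Fin (nn i) => ℝ) j) (v i j) := by
      intro i
      conv_lhs => rw [← Finset.univ_sum_single (v i)]
      exact Finset.sum_congr rfl fun j _ => rfl
    calc g v = g (∑ i, (LinearMap.single ℝ (fun i => Fin (nn i) → ℝ) i) (v i)) := by rw [← h1]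
      _ = ∑ i, g ((LinearMap.single ℝ (fun i => Fin (nn i) → ℝ) i) (v i)) := map_sum g _ _
      _ = ∑ i, ∑ j, v i j * u i j := by
          apply Finset.sum_congr rfl
          intro i _
          conv_lhs => rw [h2 i, map_sum, map_sum g]
          apply Finset.sum_congr rfl
          intro j _
          have h3 : (LinearMap.single ℝ (fun i => Fin (nn i) → ℝ) i)
                ((LinearMap.single ℝ (fun _ : Fin (nn i) => ℝ) j) (v i j))
              = (v i j) • (Pi.single i (Pi.single j 1) : ∀ i, Fin (nn i) → ℝ) := by
            have h4 : (LinearMap.single ℝ (fun _ : Fin (nn i) => ℝ) j) (v i j)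
                = (v i j) • (Pi.single j 1 : Fin (nn i) → ℝ) := by
              funext j'
              by_cases hj : j' = j <;> simp [LinearMap.single_apply, Pi.single_apply, hj]
            rw [h4, _root_.map_smul]
            rfl
          rw [h3, _root_.map_smul]
          simp only [smul_eq_mul]
          rfl
  -- the decomposition property
  have hdec : (∑ i, (P i)ᵀ.mulVec (u i)) = x := by
    have key : ∀ z : Fin n → ℝ,
        ∑ k, z k * (∑ i, (P i)ᵀ.mulVec (u i)) k = ∑ k, z k * x k := by
      intro z
      rw [← hgM z, hrep (Mlin z)]
      calc ∑ k, z k * (∑ i, (P i)ᵀ.mulVec (u i)) k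
          = ∑ k, ∑ i, z k * ((P i)ᵀ.mulVec (u i)) k := by
            apply Finset.sum_congr rfl
            intro k _
            rw [Finset.sum_apply, Finset.mul_sum]
        _ = ∑ i, ∑ k, z k * ((P i)ᵀ.mulVec (u i)) k := Finset.sum_comm
        _ = ∑ i, ∑ j, (Mlin z) i j * u i j := by
            apply Finset.sum_congr rfl
            intro i _
            have h1 : z ⬝ᵥ ((P i)ᵀ *ᵥ (u i)) = ((P i) *ᵥ z) ⬝ᵥ (u i) := by
              rw [Matrix.dotProduct_mulVec, Matrix.vecMul_transpose]
            simp only [dotProduct] at h1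
            exact h1
    funext k
    have := key (Pi.single k 1)
    simpa [Pi.single_apply, Finset.sum_ite_eq'] using this
  -- the constructed element of the infimum set
  have hbound : dualN γ (fun i => dualN (α i) (u i)) ≤ C := by
    apply dual_le hγ hd _ C
    intro t
    choose v hv1 hv2 using fun i => (dual_facts (hα i) (u i)).2.1
    have hs0 : ∀ i, 0 ≤ dualN (α i) (u i) := fun i => (dual_facts (hα i) (u i)).1
    set w : ∀ i, Fin (nn i) → ℝ := fun i => |t i| • v i with hw
    have step1 : ∑ i, t i * dualN (α i) (u i) ≤ ∑ i, |t i| * dualN (α i) (u i) := by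
      apply Finset.sum_le_sum
      intro i _
      exact mul_le_mul_of_nonneg_right (le_abs_self _) (hs0 i)
    have step2 : ∑ i, |t i| * dualN (α i) (u i) = g w := by
      rw [hrep w]
      apply Finset.sum_congr rfl
      intro i _
      rw [← hv2 i, Finset.mul_sum]
      apply Finset.sum_congr rfl
      intro j _
      have : w i j = |t i| * v i j := rfl
      rw [this]
      ring
    have step3 : g w ≤ C * γ t := by
      refine (hg_le w).trans ?_
      have h1 : γ (fun i => α i (w i)) ≤ γ t := by
        have h2 : ∀ i, α i (w i) = |t i| * α i (v i) := by
          intro i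
          have : w i = |t i| • v i := rfl
          rw [this, (hα i).1, abs_abs]
        refine hγmono _ _ fun i => ?_
        rw [h2 i, abs_of_nonneg (mul_nonneg (abs_nonneg _) (nonneg (hα i) _))]
        calc |t i| * α i (v i) ≤ |t i| * 1 :=
              mul_le_mul_of_nonneg_left (hv1 i) (abs_nonneg _)
          _ = |t i| := mul_one _
      exact mul_le_mul_of_nonneg_left h1 hC0
    linarith
  -- weak duality
  set S : Set ℝ := {r : ℝ | ∃ u : ∀ i, Fin (nn i) → ℝ,
      (∑ i, (P i)ᵀ.mulVec (u i)) = x ∧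
      r = dualN γ (fun i => dualN (α i) (u i))} with hS
  have hmem : dualN γ (fun i => dualN (α i) (u i)) ∈ S := ⟨u, hdec, rfl⟩
  have hweak : ∀ r ∈ S, C ≤ r := by
    rintro r ⟨u', hu', rfl⟩
    rw [hC]
    apply Real.sSup_le
    · rintro ρ ⟨z, hz, rfl⟩
      have hNz : 0 < γ (fun i => α i ((P i).mulVec z)) := pos hNαnorm hz
      rw [div_le_iff₀ hNz]
      calc ∑ k, z k * x k
          = ∑ i, ∑ j, ((P i).mulVec z) j * u' i j := by
            rw [← hu']
            calc ∑ k, z k * (∑ i, (P i)ᵀ.mulVec (u' i)) k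
                = ∑ k, ∑ i, z k * ((P i)ᵀ.mulVec (u' i)) k := by
                  apply Finset.sum_congr rfl
                  intro k _
                  rw [Finset.sum_apply, Finset.mul_sum]
              _ = ∑ i, ∑ k, z k * ((P i)ᵀ.mulVec (u' i)) k := Finset.sum_comm
              _ = ∑ i, ∑ j, ((P i).mulVec z) j * u' i j := by
                  apply Finset.sum_congr rfl
                  intro i _
                  have h1 : z ⬝ᵥ ((P i)ᵀ *ᵥ (u' i)) = ((P i) *ᵥ z) ⬝ᵥ (u' i) := by
                    rw [Matrix.dotProduct_mulVec, Matrix.vecMul_transpose]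
                  simpa [dotProduct] using h1
        _ ≤ ∑ i, dualN (α i) (u' i) * α i ((P i).mulVec z) := by
            apply Finset.sum_le_sum
            intro i _
            exact (dual_facts (hα i) (u' i)).2.2 ((P i).mulVec z)
        _ = ∑ i, (fun i => α i ((P i).mulVec z)) i * (fun i => dualN (α i) (u' i)) i := by
            apply Finset.sum_congr rfl
            intro i _
            ring
        _ ≤ dualN γ (fun i => dualN (α i) (u' i)) * γ (fun i => α i ((P i).mulVec z)) :=
            (dual_facts hγ _).2.2 _
    · exact (dual_facts hγ _).1
  -- conclusion
  apply le_antisymm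
  · exact le_csInf ⟨_, hmem⟩ hweak
  · exact (csInf_le ⟨C, hweak⟩ hmem).trans hbound
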